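/- Let 0 < q < 1 and let n be a positive integer. Then for all x ≠ 0, the q-derivative at x of the function G(x) := q^{−n}·x^{n−1}·( x·(D_{q⁻¹}AI(·;q))(x) − q·[n]_q·AI(x/q; q) ) equals x^{n+1}·( 1 − q^{1−n}·[n]_q·[n−1]_q / x³ )·AI(x; q); and the same identity holds with AI replaced by BI throughout. -/

import Mathlib

/-- The Jackson `q`-derivative `(D_q f)(x) = (f(x) - f(qx)) / ((1-q)x)`. -/
noncomputable def qDeriv (q : ℝ) (f : ℝ → ℝ) (x : ℝ) : ℝ :=
  (f x - f (q * x)) / ((1 - q) * x)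

/-- The `q⁻¹`-derivative `(D_{q⁻¹} f)(x) = q (f(x/q) - f(x)) / ((1-q)x)`. -/
noncomputable def qInvDeriv (q : ℝ) (f : ℝ → ℝ) (x : ℝ) : ℝ :=
  q * (f (x / q) - f x) / ((1 - q) * x)

/-- The finite q-shifted factorial `(z; q)_n`. -/
noncomputable def qPoch (z q : ℝ) (n : ℕ) : ℝ :=
  ∏ k ∈ Finset.range n, (1 - z * q ^ k)

/-- The q-bracket `[n]_q = (1 - qⁿ)/(1 - q)`. -/
noncomputable def qBracketN (q : ℝ) (n : ℕ) : ℝ := (1 - q ^ n) / (1 - q)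

/-- The q-Airy function `AI(x; q)`. -/
noncomputable def qAiryAI (q x : ℝ) : ℝ :=
  ∑' m : ℕ, q ^ (m * (3 * m + 1) / 2) * (1 - q) ^ (2 * m) * x ^ (3 * m) /
    (qPoch (q ^ 3) (q ^ 3) m * qPoch (q ^ 2) (q ^ 3) m)

/-- The q-Airy function `BI(x; q)`. -/
noncomputable def qAiryBI (q x : ℝ) : ℝ :=
  ∑' m : ℕ, q ^ (3 * m * (m + 1) / 2) * (1 - q) ^ (2 * m) * x ^ (3 * m + 1) /
    (qPoch (q ^ 3) (q ^ 3) m * qPoch (q ^ 4) (q ^ 3) m)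

/-! ### Auxiliary development -/

open Filter

/-- The `m`-th term of the series defining `AI`. -/
noncomputable def aiT (q x : ℝ) (m : ℕ) : ℝ :=
  q ^ (m * (3 * m + 1) / 2) * (1 - q) ^ (2 * m) * x ^ (3 * m) /
    (qPoch (q ^ 3) (q ^ 3) m * qPoch (q ^ 2) (q ^ 3) m)

/-- The `m`-th term of the series defining `BI`. -/
noncomputable def biT (q x : ℝ) (m : ℕ) : ℝ :=
  q ^ (3 * m * (m + 1) / 2) * (1 - q) ^ (2 * m) * x ^ (3 * m + 1) /
    (qPoch (q ^ 3) (q ^ 3) m * qPoch (q ^ 4) (q ^ 3) m)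

lemma qAiryAI_eq (q x : ℝ) : qAiryAI q x = ∑' m, aiT q x m := rfl

lemma qAiryBI_eq (q x : ℝ) : qAiryBI q x = ∑' m, biT q x m := rfl

lemma qPoch_pow_pos {q : ℝ} (hq : 0 < q) (hq1 : q < 1) (a b m : ℕ) (ha : a ≠ 0) :
    0 < qPoch (q ^ a) (q ^ b) m := by
  apply Finset.prod_pos
  intro k _
  have h1 : q ^ a * (q ^ b) ^ k = q ^ (a + b * k) := by
    rw [← pow_mul, ← pow_add]
  rw [h1]
  have : q ^ (a + b * k) < 1 := pow_lt_one₀ hq.le hq1 (by omega)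
  linarith

lemma one_sub_qpow_pos {q : ℝ} (hq : 0 < q) (hq1 : q < 1) (j : ℕ) (hj : j ≠ 0) :
    0 < 1 - q ^ j := by
  have : q ^ j < 1 := pow_lt_one₀ hq.le hq1 hj
  linarith

lemma qPoch_succ (z Q : ℝ) (m : ℕ) : qPoch z Q (m + 1) = qPoch z Q m * (1 - z * Q ^ m) :=
  Finset.prod_range_succ _ _

lemma ai_exp (m : ℕ) :
    (m + 1) * (3 * (m + 1) + 1) / 2 = m * (3 * m + 1) / 2 + (3 * m + 2) := by
  obtain ⟨c, hc⟩ := Nat.even_mul_succ_self m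
  have h1 : m * (3 * m + 1) = c + c + 2 * (m * m) := by rw [← hc]; ring
  have h2 : (m + 1) * (3 * (m + 1) + 1) = m * (3 * m + 1) + (6 * m + 4) := by ring
  rw [h2, h1]
  generalize m * m = s
  omega

lemma bi_exp (m : ℕ) :
    3 * (m + 1) * (m + 1 + 1) / 2 = 3 * m * (m + 1) / 2 + (3 * m + 3) := by
  obtain ⟨c, hc⟩ := Nat.even_mul_succ_self m
  have h1 : 3 * m * (m + 1) = 3 * (c + c) := by rw [← hc]; ring
  have h2 : 3 * (m + 1) * (m + 1 + 1) = 3 * m * (m + 1) + (6 * m + 6) := by ring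
  rw [h2, h1]
  omega

lemma aiT_succ {q : ℝ} (hq : 0 < q) (hq1 : q < 1) (x : ℝ) (m : ℕ) :
    aiT q x (m + 1) = aiT q x m *
      (q ^ (3 * m + 2) * (1 - q) ^ 2 * x ^ 3 /
        ((1 - q ^ (3 * m + 3)) * (1 - q ^ (3 * m + 2)))) := by
  have hP := (qPoch_pow_pos hq hq1 3 3 m (by norm_num)).ne'
  have hQ := (qPoch_pow_pos hq hq1 2 3 m (by norm_num)).ne'
  have h3 := (one_sub_qpow_pos hq hq1 (3 * m + 3) (by omega)).ne'
  have h2 := (one_sub_qpow_pos hq hq1 (3 * m + 2) (by omega)).ne'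
  unfold aiT
  rw [qPoch_succ, qPoch_succ,
    show (q : ℝ) ^ 3 * (q ^ 3) ^ m = q ^ (3 * m + 3) by rw [← pow_mul, ← pow_add]; ring_nf,
    show (q : ℝ) ^ 2 * (q ^ 3) ^ m = q ^ (3 * m + 2) by rw [← pow_mul, ← pow_add]; ring_nf,
    ai_exp m, pow_add,
    show 2 * (m + 1) = 2 * m + 2 by ring, pow_add,
    show 3 * (m + 1) = 3 * m + 3 by ring, pow_add]
  field_simp
  ring

lemma biT_succ {q : ℝ} (hq : 0 < q) (hq1 : q < 1) (x : ℝ) (m : ℕ) :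
    biT q x (m + 1) = biT q x m *
      (q ^ (3 * m + 3) * (1 - q) ^ 2 * x ^ 3 /
        ((1 - q ^ (3 * m + 3)) * (1 - q ^ (3 * m + 4)))) := by
  have hP := (qPoch_pow_pos hq hq1 3 3 m (by norm_num)).ne'
  have hQ := (qPoch_pow_pos hq hq1 4 3 m (by norm_num)).ne'
  have h3 := (one_sub_qpow_pos hq hq1 (3 * m + 3) (by omega)).ne'
  have h4 := (one_sub_qpow_pos hq hq1 (3 * m + 4) (by omega)).ne'
  unfold biT
  rw [qPoch_succ, qPoch_succ,
    show (q : ℝ) ^ 3 * (q ^ 3) ^ m = q ^ (3 * m + 3) by rw [← pow_mul, ← pow_add]; ring_nf,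
    show (q : ℝ) ^ 4 * (q ^ 3) ^ m = q ^ (3 * m + 4) by rw [← pow_mul, ← pow_add]; ring_nf,
    bi_exp m,
    show 3 * (m + 1) + 1 = (3 * m + 1) + 3 by ring,
    pow_add, pow_add,
    show 2 * (m + 1) = 2 * m + 2 by ring, pow_add]
  field_simp
  ring

/-- Common summability argument: a sequence satisfying the `aiT`/`biT`-type recurrence
is summable. -/
lemma summable_of_qrec {q : ℝ} (hq : 0 < q) (hq1 : q < 1) (x : ℝ) (f : ℕ → ℝ) (e : ℕ)
    (hf : ∀ m, f (m + 1) = f m *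
      (q ^ (3 * m + 2 + e) * (1 - q) ^ 2 * x ^ 3 /
        ((1 - q ^ (3 * m + 3)) * (1 - q ^ (3 * m + 2 + 2 * e))))) :
    Summable f := by
  have hq2 : (0 : ℝ) < 1 - q ^ 2 := one_sub_qpow_pos hq hq1 2 (by norm_num)
  set C : ℝ := q ^ 2 * (1 - q) ^ 2 * |x| ^ 3 / ((1 - q ^ 2) * (1 - q ^ 2)) with hC
  have htend : Tendsto (fun m : ℕ => (q ^ 3) ^ m * C) atTop (nhds 0) := by
    simpa using (tendsto_pow_atTop_nhds_zero_of_lt_one (by positivity)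
      (pow_lt_one₀ hq.le hq1 (by norm_num))).mul_const C
  apply summable_of_ratio_norm_eventually_le (r := (1 : ℝ) / 2) (by norm_num)
  filter_upwards [htend.eventually_lt_const (by norm_num : (0 : ℝ) < 1 / 2)] with m hm
  have h3 := one_sub_qpow_pos hq hq1 (3 * m + 3) (by omega)
  have h2 := one_sub_qpow_pos hq hq1 (3 * m + 2 + 2 * e) (by omega)
  have habs : |q ^ (3 * m + 2 + e) * (1 - q) ^ 2 * x ^ 3 /
      ((1 - q ^ (3 * m + 3)) * (1 - q ^ (3 * m + 2 + 2 * e)))|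
      = q ^ (3 * m + 2 + e) * (1 - q) ^ 2 * |x| ^ 3 /
        ((1 - q ^ (3 * m + 3)) * (1 - q ^ (3 * m + 2 + 2 * e))) := by
    rw [abs_div, abs_mul, abs_mul, ← abs_pow,
      abs_of_nonneg (pow_nonneg hq.le _),
      abs_of_nonneg (by positivity : (0 : ℝ) ≤ (1 - q) ^ 2),
      abs_of_pos (mul_pos h3 h2), abs_pow]
  have hb : |q ^ (3 * m + 2 + e) * (1 - q) ^ 2 * x ^ 3 /
      ((1 - q ^ (3 * m + 3)) * (1 - q ^ (3 * m + 2 + 2 * e)))| ≤ (q ^ 3) ^ m * C := by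
    rw [habs]
    have step2 : (q ^ 3) ^ m * C
        = (q ^ 3) ^ m * (q ^ 2 * (1 - q) ^ 2 * |x| ^ 3) / ((1 - q ^ 2) * (1 - q ^ 2)) := by
      rw [hC]; ring
    have hnum : q ^ (3 * m + 2 + e) * (1 - q) ^ 2 * |x| ^ 3
        ≤ (q ^ 3) ^ m * (q ^ 2 * (1 - q) ^ 2 * |x| ^ 3) := by
      have : q ^ (3 * m + 2 + e) ≤ q ^ (3 * m + 2) :=
        pow_le_pow_of_le_one hq.le hq1.le (by omega)
      calc q ^ (3 * m + 2 + e) * (1 - q) ^ 2 * |x| ^ 3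
          ≤ q ^ (3 * m + 2) * (1 - q) ^ 2 * |x| ^ 3 := by
            apply mul_le_mul_of_nonneg_right _ (by positivity)
            exact mul_le_mul_of_nonneg_right this (by positivity)
        _ = (q ^ 3) ^ m * (q ^ 2 * (1 - q) ^ 2 * |x| ^ 3) := by ring
    have hden : (1 - q ^ 2) * (1 - q ^ 2)
        ≤ (1 - q ^ (3 * m + 3)) * (1 - q ^ (3 * m + 2 + 2 * e)) := by
      have a1 : q ^ (3 * m + 3) ≤ q ^ 2 := pow_le_pow_of_le_one hq.le hq1.le (by omega)
      have a2 : q ^ (3 * m + 2 + 2 * e) ≤ q ^ 2 := pow_le_pow_of_le_one hq.le hq1.le (by omega)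
      nlinarith
    rw [step2]
    calc q ^ (3 * m + 2 + e) * (1 - q) ^ 2 * |x| ^ 3 /
        ((1 - q ^ (3 * m + 3)) * (1 - q ^ (3 * m + 2 + 2 * e)))
        ≤ (q ^ 3) ^ m * (q ^ 2 * (1 - q) ^ 2 * |x| ^ 3) /
          ((1 - q ^ (3 * m + 3)) * (1 - q ^ (3 * m + 2 + 2 * e))) := by
          exact (div_le_div_iff_of_pos_right (mul_pos h3 h2)).mpr hnum
      _ ≤ (q ^ 3) ^ m * (q ^ 2 * (1 - q) ^ 2 * |x| ^ 3) / ((1 - q ^ 2) * (1 - q ^ 2)) := by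
          exact div_le_div_of_nonneg_left (by positivity) (mul_pos hq2 hq2) hden
  calc ‖f (m + 1)‖ = ‖f m‖ * |q ^ (3 * m + 2 + e) * (1 - q) ^ 2 * x ^ 3 /
      ((1 - q ^ (3 * m + 3)) * (1 - q ^ (3 * m + 2 + 2 * e)))| := by
        rw [hf m, Real.norm_eq_abs, Real.norm_eq_abs, abs_mul]
    _ ≤ ‖f m‖ * ((q ^ 3) ^ m * C) := mul_le_mul_of_nonneg_left hb (norm_nonneg _)
    _ ≤ ‖f m‖ * (1 / 2) := mul_le_mul_of_nonneg_left hm.le (norm_nonneg _)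
    _ = 1 / 2 * ‖f m‖ := mul_comm _ _

lemma aiT_summable {q : ℝ} (hq : 0 < q) (hq1 : q < 1) (x : ℝ) : Summable (aiT q x) := by
  apply summable_of_qrec hq hq1 x (aiT q x) 0
  intro m
  simpa using aiT_succ hq hq1 x m

lemma biT_summable {q : ℝ} (hq : 0 < q) (hq1 : q < 1) (x : ℝ) : Summable (biT q x) := by
  apply summable_of_qrec hq hq1 x (biT q x) 1
  intro m
  have := biT_succ hq hq1 x m
  convert this using 4 <;> omega

lemma aiT_div (q : ℝ) (hq : q ≠ 0) (x : ℝ) (m : ℕ) :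
    aiT q (x / q) m = aiT q x m * (q ^ (3 * m))⁻¹ := by
  unfold aiT
  rw [div_pow]
  ring

lemma aiT_mul (q x : ℝ) (m : ℕ) :
    aiT q (q * x) m = aiT q x m * q ^ (3 * m) := by
  unfold aiT
  rw [mul_pow]
  ring

lemma biT_div (q : ℝ) (hq : q ≠ 0) (x : ℝ) (m : ℕ) :
    biT q (x / q) m = biT q x m * (q ^ (3 * m + 1))⁻¹ := by
  unfold biT
  rw [div_pow]
  ring

lemma biT_mul (q x : ℝ) (m : ℕ) :
    biT q (q * x) m = biT q x m * q ^ (3 * m + 1) := by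
  unfold biT
  rw [mul_pow]
  ring

/-- The key functional equation for `AI`. -/
lemma ai_key {q : ℝ} (hq : 0 < q) (hq1 : q < 1) (x : ℝ) :
    q * qAiryAI q (x / q) + qAiryAI q (q * x) - (1 + q) * qAiryAI q x
      = (1 - q) ^ 2 * x ^ 3 * qAiryAI q x := by
  have hqne : q ≠ 0 := hq.ne'
  have S1 := aiT_summable hq hq1 (x := x / q)
  have S2 := aiT_summable hq hq1 (x := q * x)
  have S3 := aiT_summable hq hq1 (x := x)
  have e1 : (∑' m, (q * aiT q (x / q) m + aiT q (q * x) m - (1 + q) * aiT q x m))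
      = q * (∑' m, aiT q (x / q) m) + (∑' m, aiT q (q * x) m)
        - (1 + q) * (∑' m, aiT q x m) := by
    rw [Summable.tsum_sub ((S1.mul_left q).add S2) (S3.mul_left (1 + q)),
      Summable.tsum_add (S1.mul_left q) S2, tsum_mul_left, tsum_mul_left]
  rw [qAiryAI_eq, qAiryAI_eq, qAiryAI_eq, ← e1, ← tsum_mul_left]
  rw [Summable.tsum_eq_zero_add (((S1.mul_left q).add S2).sub (S3.mul_left (1 + q)))]
  rw [show (q * aiT q (x / q) 0 + aiT q (q * x) 0 - (1 + q) * aiT q x 0) = 0 by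
    simp [aiT, qPoch]; ring]
  rw [zero_add]
  apply tsum_congr
  intro m
  have h3 := (one_sub_qpow_pos hq hq1 (3 * m + 3) (by omega)).ne'
  have h2 := (one_sub_qpow_pos hq hq1 (3 * m + 2) (by omega)).ne'
  rw [aiT_div q hqne, aiT_mul, aiT_succ hq hq1 x m]
  field_simp
  ring

/-- The key functional equation for `BI`. -/
lemma bi_key {q : ℝ} (hq : 0 < q) (hq1 : q < 1) (x : ℝ) :
    q * qAiryBI q (x / q) + qAiryBI q (q * x) - (1 + q) * qAiryBI q x
      = (1 - q) ^ 2 * x ^ 3 * qAiryBI q x := by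
  have hqne : q ≠ 0 := hq.ne'
  have S1 := biT_summable hq hq1 (x := x / q)
  have S2 := biT_summable hq hq1 (x := q * x)
  have S3 := biT_summable hq hq1 (x := x)
  have e1 : (∑' m, (q * biT q (x / q) m + biT q (q * x) m - (1 + q) * biT q x m))
      = q * (∑' m, biT q (x / q) m) + (∑' m, biT q (q * x) m)
        - (1 + q) * (∑' m, biT q x m) := by
    rw [Summable.tsum_sub ((S1.mul_left q).add S2) (S3.mul_left (1 + q)),
      Summable.tsum_add (S1.mul_left q) S2, tsum_mul_left, tsum_mul_left]
  rw [qAiryBI_eq, qAiryBI_eq, qAiryBI_eq, ← e1, ← tsum_mul_left]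
  rw [Summable.tsum_eq_zero_add (((S1.mul_left q).add S2).sub (S3.mul_left (1 + q)))]
  rw [show (q * biT q (x / q) 0 + biT q (q * x) 0 - (1 + q) * biT q x 0) = 0 by
    simp [biT, qPoch]; field_simp; ring]
  rw [zero_add]
  apply tsum_congr
  intro m
  have h3 := (one_sub_qpow_pos hq hq1 (3 * m + 3) (by omega)).ne'
  have h4 := (one_sub_qpow_pos hq hq1 (3 * m + 4) (by omega)).ne'
  rw [biT_div q hqne, biT_mul, biT_succ hq hq1 x m]
  field_simp
  ring

/-- Indefinite q-integrals for the q-Airy functions `AI` and `BI`. -/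
theorem qIntegral_qAiry (q : ℝ) (hq : 0 < q) (hq1 : q < 1) (n : ℕ) (hn : 1 ≤ n) :
    (∀ x : ℝ, x ≠ 0 →
      qDeriv q
        (fun t => q ^ (-(n : ℤ)) * t ^ (n - 1) *
          (t * qInvDeriv q (fun s => qAiryAI q s) t
            - q * qBracketN q n * qAiryAI q (t / q))) x
      = x ^ (n + 1) *
          (1 - q ^ (1 - (n : ℤ)) * qBracketN q n * qBracketN q (n - 1) / x ^ 3) *
          qAiryAI q x)
    ∧ (∀ x : ℝ, x ≠ 0 →
      qDeriv q
        (fun t => q ^ (-(n : ℤ)) * t ^ (n - 1) *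
          (t * qInvDeriv q (fun s => qAiryBI q s) t
            - q * qBracketN q n * qAiryBI q (t / q))) x
      = x ^ (n + 1) *
          (1 - q ^ (1 - (n : ℤ)) * qBracketN q n * qBracketN q (n - 1) / x ^ 3) *
          qAiryBI q x) := by
  obtain ⟨k, rfl⟩ : ∃ k, n = k + 1 := ⟨n - 1, by omega⟩
  have hqne : q ≠ 0 := hq.ne'
  have h1q : (1 : ℝ) - q ≠ 0 := by linarith
  have hz1 : (q : ℝ) ^ (-((k + 1 : ℕ) : ℤ)) = (q ^ (k + 1))⁻¹ := by
    rw [zpow_neg, zpow_natCast]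
  have hz2 : (q : ℝ) ^ (1 - ((k + 1 : ℕ) : ℤ)) = (q ^ k)⁻¹ := by
    rw [show (1 - ((k + 1 : ℕ) : ℤ)) = -(k : ℤ) by push_cast; ring, zpow_neg, zpow_natCast]
  constructor
  · intro x hx
    have hkey := ai_key hq hq1 x
    simp only [qDeriv, qInvDeriv, qBracketN, Nat.add_sub_cancel]
    have hxq : q * x / q = x := by field_simp
    rw [hxq, hz1, hz2]
    set A := qAiryAI q (x / q) with hA
    set B := qAiryAI q x with hB
    set C := qAiryAI q (q * x) with hCdef
    have hC : C = (1 - q) ^ 2 * x ^ 3 * B + (1 + q) * B - q * A := by linarith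
    rw [hC]
    field_simp
    ring
  · intro x hx
    have hkey := bi_key hq hq1 x
    simp only [qDeriv, qInvDeriv, qBracketN, Nat.add_sub_cancel]
    have hxq : q * x / q = x := by field_simp
    rw [hxq, hz1, hz2]
    set A := qAiryBI q (x / q) with hA
    set B := qAiryBI q x with hB
    set C := qAiryBI q (q * x) with hCdef
    have hC : C = (1 - q) ^ 2 * x ^ 3 * B + (1 + q) * B - q * A := by linarith
    rw [hC]
    field_simp
    ring
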